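/- Let π^{(t)}, t = 1, ..., T+1, be distributions on a finite set A updated by π^{(t+1)}(a) ∝ π^{(t)}(a)·exp(η·f^{(t)}(a)) with f^{(t)} : A → [0, H] and η > 0. Then for any t₁ ≤ t₂ in [T] and any g : A → [0, H], ⟨g, π^{(t₂)} - π^{(t₁)}⟩ ≤ η·H²·(t₂ - t₁). -/
import Mathlib


open Finset

/-- For multiplicative-weights iterates with scores in [0,H],
⟨g, π^{(t₂)} - π^{(t₁)}⟩ ≤ η·H²·(t₂ - t₁) for any g : A → [0,H]. -/
theorem stmt_11 {A : Type*} [Fintype A] (η H : ℝ) (hη : 0 < η) (hH : 0 < H)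
    (T : ℕ) (f : ℕ → A → ℝ) (hf : ∀ t a, 0 ≤ f t a ∧ f t a ≤ H)
    (π : ℕ → A → ℝ)
    (hpos : ∀ t a, 0 < π t a) (hsum : ∀ t, ∑ a, π t a = 1)
    (hupd : ∀ t a, π (t + 1) a =
      π t a * Real.exp (η * f t a) / ∑ a', π t a' * Real.exp (η * f t a'))
    (t₁ t₂ : ℕ) (h12 : t₁ ≤ t₂) (h2T : t₂ ≤ T)
    (g : A → ℝ) (hg : ∀ a, 0 ≤ g a ∧ g a ≤ H) :
    ∑ a, g a * (π t₂ a - π t₁ a) ≤ η * H ^ 2 * ((t₂ : ℝ) - (t₁ : ℝ)) := by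
  have key : ∀ t, ∑ a, g a * (π (t+1) a - π t a) ≤ η * H ^ 2 := by
    intro t
    set Z := ∑ a', π t a' * Real.exp (η * f t a') with hZdef
    have hZ1 : (1:ℝ) ≤ Z := by
      calc (1:ℝ) = ∑ a, π t a := (hsum t).symm
        _ ≤ Z := Finset.sum_le_sum fun a _ => by
            nlinarith [Real.one_le_exp (mul_nonneg hη.le (hf t a).1), hpos t a]
    have hZpos : (0:ℝ) < Z := lt_of_lt_of_le one_pos hZ1
    have hZle : Z ≤ Real.exp (η * H) := by
      calc Z ≤ ∑ a, π t a * Real.exp (η * H) := Finset.sum_le_sum fun a _ => by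
            have h1 : Real.exp (η * f t a) ≤ Real.exp (η * H) :=
              Real.exp_le_exp.2 (mul_le_mul_of_nonneg_left (hf t a).2 hη.le)
            nlinarith [(hpos t a).le]
        _ = Real.exp (η * H) := by rw [← Finset.sum_mul, hsum t, one_mul]
    -- pointwise bound on the negative part
    have hneg : ∀ a, max (π t a - π (t+1) a) 0 ≤ π t a * (η * H) := by
      intro a
      have hE : (1:ℝ) ≤ Real.exp (η * f t a) :=
        Real.one_le_exp (mul_nonneg hη.le (hf t a).1)
      have hinv : Real.exp (-(η * H)) ≤ 1 / Z := by
        rw [Real.exp_neg, ← one_div]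
        exact one_div_le_one_div_of_le hZpos hZle
      have hlin : 1 - η * H ≤ Real.exp (-(η * H)) := by
        have := Real.add_one_le_exp (-(η * H)); linarith
      have hfrac : 1 - η * H ≤ Real.exp (η * f t a) / Z := by
        have h1 : 1 / Z ≤ Real.exp (η * f t a) / Z := by gcongr
        linarith
      have hstep : π t a - π (t+1) a ≤ π t a * (η * H) := by
        rw [hupd t a, ← hZdef]
        have hπ := (hpos t a).le
        have : π t a * (1 - η * H) ≤ π t a * (Real.exp (η * f t a) / Z) :=
          mul_le_mul_of_nonneg_left hfrac hπ
        have heq : π t a * Real.exp (η * f t a) / Z = π t a * (Real.exp (η * f t a) / Z) := by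
          ring
        rw [heq]; nlinarith
      have hnn : 0 ≤ π t a * (η * H) :=
        mul_nonneg (hpos t a).le (mul_nonneg hη.le hH.le)
      exact max_le hstep hnn
    -- sum of positive parts equals sum of negative parts
    have hsum0 : ∑ a, (π (t+1) a - π t a) = 0 := by
      rw [Finset.sum_sub_distrib, hsum, hsum]; ring
    have hpm : ∑ a, max (π (t+1) a - π t a) 0 = ∑ a, max (π t a - π (t+1) a) 0 := by
      have hpt : ∀ a : A, max (π (t+1) a - π t a) 0 =
          (π (t+1) a - π t a) + max (π t a - π (t+1) a) 0 := by
        intro a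
        rcases le_total (π (t+1) a - π t a) 0 with h | h
        · rw [max_eq_right h, max_eq_left (by linarith)]; ring
        · rw [max_eq_left h, max_eq_right (by linarith)]; ring
      rw [Finset.sum_congr rfl fun a _ => hpt a, Finset.sum_add_distrib, hsum0, zero_add]
    calc ∑ a, g a * (π (t+1) a - π t a)
        ≤ ∑ a, H * max (π (t+1) a - π t a) 0 := by
          refine Finset.sum_le_sum fun a _ => ?_
          rcases le_total (π (t+1) a - π t a) 0 with h | h
          · rw [max_eq_right h]
            nlinarith [(hg a).1, (hg a).2]
          · rw [max_eq_left h]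
            nlinarith [(hg a).1, (hg a).2]
      _ = H * ∑ a, max (π t a - π (t+1) a) 0 := by rw [← Finset.mul_sum, hpm]
      _ ≤ H * ∑ a, π t a * (η * H) := by
          refine mul_le_mul_of_nonneg_left (Finset.sum_le_sum fun a _ => hneg a) hH.le
      _ = η * H ^ 2 := by rw [← Finset.sum_mul, hsum t]; ring
  clear h2T
  induction t₂, h12 using Nat.le_induction with
  | base => simp
  | succ n hn ih =>
    have hk := key n
    have hsplit : ∑ a, g a * (π (n+1) a - π t₁ a)
        = ∑ a, g a * (π (n+1) a - π n a) + ∑ a, g a * (π n a - π t₁ a) := by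
      rw [← Finset.sum_add_distrib]
      exact Finset.sum_congr rfl fun a _ => by ring
    push_cast
    rw [hsplit]
    push_cast at ih
    linarith
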